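/- Let p ≥ 2 and 1 ≤ m ≤ 2p − 1 be integers. There exists an m-dimensional real linear subspace W of ℂ^p (viewed as a 2p-dimensional real vector space) such that for every diagonal unitary matrix U ∈ Mₚ(ℂ) (a diagonal matrix all of whose diagonal entries have modulus 1), if U·W = W (setwise image of W under the linear map U) then U = 1 or U = −1. (This is the existence form of the statement that a generic m-dimensional real subspace of ℂ^p is not invariant under any nontrivial diagonal unitary ≠ ±1.) -/

import Mathlib

open Finset

namespace NotInvariantAux

/-! ### Generic helper lemmas -/

lemma sum_fin_lt {M : Type*} [AddCommMonoid M] (n a : ℕ) (h : a ≤ n) (g : ℕ → M) :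
    ∑ j ∈ univ.filter (fun j : Fin n => j.val < a), g j.val = ∑ i ∈ Finset.range a, g i := by
  rw [Finset.sum_filter, Fin.sum_univ_eq_sum_range (fun i => if i < a then g i else 0) n,
    ← Finset.sum_filter]
  congr 1
  ext i; simp only [mem_filter, mem_range]; omega

lemma card_fin_lt (n a : ℕ) (h : a ≤ n) :
    (univ.filter (fun j : Fin n => j.val < a)).card = a := by
  have := sum_fin_lt n a h (fun _ => (1 : ℕ))
  rw [Finset.card_eq_sum_ones]
  rw [this, Finset.sum_const, Finset.card_range, smul_eq_mul, mul_one]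

lemma sign_sum {ι : Type*} (s : Finset ι) (f : ι → ℝ) (ε : ℝ) (hε : ε = 1 ∨ ε = -1)
    (hf : ∀ j ∈ s, f j = 1 ∨ f j = -1)
    (hsum : ∑ j ∈ s, f j = s.card * ε) : ∀ j ∈ s, f j = ε := by
  have h0 : ∑ j ∈ s, (1 - ε * f j) = 0 := by
    rw [Finset.sum_sub_distrib, Finset.sum_const, ← Finset.mul_sum, hsum]
    have : ε * ε = 1 := by rcases hε with h | h <;> rw [h] <;> norm_num
    simp only [nsmul_eq_mul, mul_one]
    rw [show ε * ((s.card : ℝ) * ε) = (s.card : ℝ) * (ε * ε) by ring, this]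
    ring
  have hnn : ∀ j ∈ s, 0 ≤ 1 - ε * f j := by
    intro j hj
    rcases hf j hj with h | h <;> rcases hε with h' | h' <;> rw [h, h'] <;> norm_num
  have hall := (Finset.sum_eq_zero_iff_of_nonneg hnn).mp h0
  intro j hj
  have hj' := hall j hj
  rcases hf j hj with h | h <;> rcases hε with h' | h' <;> rw [h, h'] at hj' ⊢ <;>
    norm_num at hj'

lemma unit_real {z : ℂ} (h1 : ‖z‖ = 1) (h2 : z.im = 0) : z = 1 ∨ z = -1 := by
  have hz : z = (z.re : ℂ) := Complex.ext rfl (by simp [h2])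
  rw [hz, Complex.norm_real, Real.norm_eq_abs] at h1
  rcases (abs_eq (by norm_num : (0:ℝ) ≤ 1)).mp h1 with h | h
  · left; rw [hz, h]; norm_num
  · right; rw [hz, h]; norm_num

lemma diag_mulVec {p : ℕ} (U : Matrix (Fin p) (Fin p) ℂ) (h : ∀ i j, i ≠ j → U i j = 0)
    (v : Fin p → ℂ) (j : Fin p) : U.mulVec v j = U j j * v j := by
  unfold Matrix.mulVec dotProduct
  rw [Finset.sum_eq_single j]
  · intro b _ hb; show U j b * v b = 0; rw [h j b (Ne.symm hb), zero_mul]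
  · intro hj; exact absurd (mem_univ j) hj

lemma diag_eq_pm_one {p : ℕ} (U : Matrix (Fin p) (Fin p) ℂ)
    (hdiag : ∀ i j, i ≠ j → U i j = 0) (ε : ℂ) (hε : ε = 1 ∨ ε = -1)
    (h : ∀ i, U i i = ε) : U = 1 ∨ U = -1 := by
  rcases hε with h1 | h1
  · left; ext i j
    by_cases hij : i = j
    · subst hij; rw [h i, h1, Matrix.one_apply_eq]
    · rw [hdiag i j hij, Matrix.one_apply_ne hij]
  · right; ext i j
    by_cases hij : i = j
    · subst hij; rw [h i, h1]; simp [Matrix.one_apply_eq]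
    · rw [hdiag i j hij]; simp [Matrix.one_apply_ne hij]

/-! ### The basic parametrization `psiN` -/

/-- parametrization of the rigid subspace `V_r ⊆ ℝ^p`. -/
noncomputable def psiN (r : ℕ) (g : ℕ → ℝ) (i : ℕ) : ℝ :=
  if i < r - 1 then g i
  else if i = r - 1 then (r : ℝ) * g (r - 1) - ∑ k ∈ Finset.range (r - 1), g k
  else g (r - 1)

lemma psiN_add (r : ℕ) (g g' : ℕ → ℝ) (i : ℕ) :
    psiN r (fun i => g i + g' i) i = psiN r g i + psiN r g' i := by
  unfold psiN
  split_ifs <;> [rfl; (rw [Finset.sum_add_distrib]; ring); rfl]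

lemma psiN_smul (r : ℕ) (c : ℝ) (g : ℕ → ℝ) (i : ℕ) :
    psiN r (fun i => c * g i) i = c * psiN r g i := by
  unfold psiN
  split_ifs <;> [rfl; (rw [← Finset.mul_sum]; ring); rfl]

lemma psiN_ge (r : ℕ) (hr : 1 ≤ r) (g : ℕ → ℝ) (i : ℕ) (hi : r ≤ i) :
    psiN r g i = g (r - 1) := by
  unfold psiN
  rw [if_neg (by omega), if_neg (by omega)]

lemma psiN_sum (r : ℕ) (hr : 1 ≤ r) (g : ℕ → ℝ) :
    ∑ i ∈ Finset.range r, psiN r g i = r * g (r - 1) := by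
  have hins : Finset.range r = insert (r - 1) (Finset.range (r - 1)) := by
    ext i; simp only [mem_insert, mem_range]; omega
  rw [hins, Finset.sum_insert (by simp)]
  have h1 : psiN r g (r - 1) = (r : ℝ) * g (r - 1) - ∑ k ∈ Finset.range (r - 1), g k := by
    unfold psiN; rw [if_neg (by omega), if_pos rfl]
  have h2 : ∑ i ∈ Finset.range (r - 1), psiN r g i = ∑ i ∈ Finset.range (r - 1), g i := by
    apply Finset.sum_congr rfl
    intro i hi; rw [mem_range] at hi
    unfold psiN; rw [if_pos hi]
  rw [h1, h2]; ring

lemma psiN_sum_fin (p r : ℕ) (hr : 1 ≤ r) (hrp : r ≤ p) (g : ℕ → ℝ) :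
    ∑ j ∈ univ.filter (fun j : Fin p => j.val < r), psiN r g j.val = r * g (r - 1) := by
  rw [sum_fin_lt p r hrp (psiN r g), psiN_sum r hr g]

lemma psiN_ones (r : ℕ) (hr : 1 ≤ r) (g : ℕ → ℝ) (hg : ∀ i < r, g i = 1) (i : ℕ) :
    psiN r g i = 1 := by
  unfold psiN
  have hsum : ∑ k ∈ Finset.range (r - 1), g k = (r : ℝ) - 1 := by
    rw [Finset.sum_congr rfl (fun k hk => hg k (by rw [mem_range] at hk; omega))]
    simp only [Finset.sum_const, nsmul_eq_mul, mul_one, Finset.card_range]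
    have : (1:ℕ) ≤ r := hr
    push_cast [Nat.cast_sub hr]
    ring
  split_ifs with h1 h2
  · exact hg i (by omega)
  · rw [hsum, hg (r-1) (by omega)]; ring
  · exact hg (r-1) (by omega)


/-! ### extension of finite tuples -/

noncomputable def extF (m : ℕ) (t : Fin m → ℝ) (i : ℕ) : ℝ :=
  if h : i < m then t ⟨i, h⟩ else 0

lemma extF_add (m : ℕ) (t t' : Fin m → ℝ) (i : ℕ) :
    extF m (t + t') i = extF m t i + extF m t' i := by
  unfold extF; split_ifs <;> simp

lemma extF_smul (m : ℕ) (c : ℝ) (t : Fin m → ℝ) (i : ℕ) :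
    extF m (c • t) i = c * extF m t i := by
  unfold extF; split_ifs <;> simp

/-! ### Case A : `1 ≤ m < p`, the totally real rigid subspace -/

noncomputable def phiA (p m : ℕ) (t : Fin m → ℝ) (j : Fin p) : ℂ :=
  ((psiN m (extF m t) j.val : ℝ) : ℂ)

lemma phiA_lin (p m : ℕ) : IsLinearMap ℝ (phiA p m) := by
  constructor
  · intro t t'; funext j
    unfold phiA
    rw [show extF m (t + t') = fun i => extF m t i + extF m t' i from funext (extF_add m t t'),
      psiN_add]
    push_cast; rfl
  · intro c t; funext j
    unfold phiA
    rw [show extF m (c • t) = fun i => c * extF m t i from funext (extF_smul m c t),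
      psiN_smul]
    push_cast
    rfl

lemma caseA (p m : ℕ) (hp : 2 ≤ p) (hm1 : 1 ≤ m) (hmp : m < p) :
    ∃ W : Submodule ℝ (Fin p → ℂ), Module.finrank ℝ W = m ∧
      ∀ U : Matrix (Fin p) (Fin p) ℂ,
        (∀ i j, i ≠ j → U i j = 0) → (∀ i, ‖U i i‖ = 1) →
        (fun v => U.mulVec v) '' (W : Set (Fin p → ℂ)) = (W : Set (Fin p → ℂ)) →
        U = 1 ∨ U = -1 := by
  set f : (Fin m → ℝ) →ₗ[ℝ] (Fin p → ℂ) := IsLinearMap.mk' (phiA p m) (phiA_lin p m) with hf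
  have hfappl : ∀ t j, f t j = ((psiN m (extF m t) j.val : ℝ) : ℂ) := fun t j => rfl
  have hinj : Function.Injective f := by
    rw [← LinearMap.ker_eq_bot, LinearMap.ker_eq_bot']
    intro t ht
    funext k
    rcases lt_or_ge k.val (m - 1) with hk | hk
    · have h := congrFun ht ⟨k.val, by omega⟩
      rw [hfappl] at h
      simp only [Pi.zero_apply, Complex.ofReal_eq_zero] at h
      unfold psiN at h
      rw [if_pos hk] at h
      unfold extF at h
      rw [dif_pos k.isLt] at h
      simpa using h
    · have hkm : k.val = m - 1 := by omega
      have h := congrFun ht ⟨p - 1, by omega⟩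
      rw [hfappl] at h
      simp only [Pi.zero_apply, Complex.ofReal_eq_zero] at h
      rw [psiN_ge m hm1 _ _ (by show m ≤ p - 1; omega)] at h
      unfold extF at h
      rw [dif_pos (by omega : m - 1 < m)] at h
      have : k = (⟨m - 1, by omega⟩ : Fin m) := by
        apply Fin.ext; simpa using hkm
      rw [this]; exact h
  refine ⟨LinearMap.range f, ?_, ?_⟩
  · rw [← (LinearEquiv.ofInjective f hinj).finrank_eq]
    simp [Module.finrank_pi]
  intro U hdiag habs himg
  have hsub : ∀ w : Fin p → ℂ, w ∈ LinearMap.range f → U.mulVec w ∈ LinearMap.range f := by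
    intro w hw
    have hmem : U.mulVec w ∈ (fun v => U.mulVec v) '' ((LinearMap.range f : Submodule ℝ (Fin p → ℂ)) : Set (Fin p → ℂ)) := ⟨w, hw, rfl⟩
    rw [himg] at hmem
    exact hmem
  have hones : f (fun _ => (1:ℝ)) = fun _ => (1:ℂ) := by
    funext j
    rw [hfappl]
    rw [psiN_ones m hm1 _ (fun i hi => by unfold extF; rw [dif_pos hi]) j.val]
    norm_num
  obtain ⟨t, ht⟩ := hsub _ ⟨_, hones⟩
  have key : ∀ j : Fin p, U j j = ((psiN m (extF m t) j.val : ℝ) : ℂ) := by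
    intro j
    have h := congrFun ht j
    rw [hfappl] at h
    rw [diag_mulVec U hdiag _ j, mul_one] at h
    exact h.symm
  have him : ∀ j, (U j j).im = 0 := fun j => by rw [key j]; exact Complex.ofReal_im _
  have hpm : ∀ j, U j j = 1 ∨ U j j = -1 := fun j => unit_real (habs j) (him j)
  set c : ℝ := extF m t (m - 1) with hcdef
  have hre : ∀ j : Fin p, (U j j).re = psiN m (extF m t) j.val := by
    intro j; rw [key j]; exact Complex.ofReal_re _
  have hge : ∀ j : Fin p, m ≤ j.val → (U j j).re = c := by
    intro j hj; rw [hre j, psiN_ge m hm1 _ _ hj]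
  have hclast : (U ⟨p-1, by omega⟩ ⟨p-1, by omega⟩).re = c := hge _ (by show m ≤ p - 1; omega)
  have hc : c = 1 ∨ c = -1 := by
    rcases hpm ⟨p-1, by omega⟩ with h | h
    · left; rw [h] at hclast; simpa using hclast.symm
    · right; rw [h] at hclast; simp at hclast; exact hclast.symm
  have hsum : ∑ j ∈ univ.filter (fun j : Fin p => j.val < m), (U j j).re
      = ((univ.filter (fun j : Fin p => j.val < m)).card : ℝ) * c := by
    rw [Finset.sum_congr rfl (fun j _ => hre j), psiN_sum_fin p m hm1 (le_of_lt hmp),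
      card_fin_lt p m (le_of_lt hmp)]
  have hsigns : ∀ j ∈ univ.filter (fun j : Fin p => j.val < m),
      (U j j).re = 1 ∨ (U j j).re = -1 := by
    intro j _
    rcases hpm j with h | h <;> rw [h] <;> simp
  have happ := sign_sum _ (fun j => (U j j).re) c hc hsigns hsum
  have hall : ∀ j : Fin p, (U j j).re = c := by
    intro j
    by_cases hj : j.val < m
    · exact happ j (by simp [hj])
    · exact hge j (by omega)
  have hend : ∀ j : Fin p, U j j = (c : ℂ) := by
    intro j; rw [key j, ← hre j, hall j]
  exact diag_eq_pm_one U hdiag (c:ℂ)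
    (hc.imp (fun h => by rw [h]; norm_num) (fun h => by rw [h]; norm_num)) hend


/-! ### Case B : `m = p` -/

lemma psiN_zero (r : ℕ) (hr : 1 ≤ r) (g : ℕ → ℝ) (hg : ∀ i < r, g i = 0) (i : ℕ) :
    psiN r g i = 0 := by
  unfold psiN
  have hsum : ∑ k ∈ Finset.range (r - 1), g k = 0 :=
    Finset.sum_eq_zero (fun k hk => hg k (by rw [mem_range] at hk; omega))
  split_ifs with h1 h2
  · exact hg i (by omega)
  · rw [hsum, hg (r-1) (by omega)]; ring
  · exact hg (r-1) (by omega)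

noncomputable def phiB (p : ℕ) (t : Fin p → ℝ) (j : Fin p) : ℂ :=
  ((psiN (p-1) (extF p t) j.val : ℝ) : ℂ) +
    (if j.val = 0 then ((extF p t (p-1) : ℝ) : ℂ) * Complex.I else 0)

lemma phiB_lin (p : ℕ) : IsLinearMap ℝ (phiB p) := by
  constructor
  · intro t t'; funext j
    unfold phiB
    rw [show extF p (t + t') = fun i => extF p t i + extF p t' i from funext (extF_add p t t'),
      psiN_add]
    simp only [Pi.add_apply]
    split_ifs <;> push_cast <;> ring
  · intro c t; funext j
    unfold phiB
    rw [show extF p (c • t) = fun i => c * extF p t i from funext (extF_smul p c t),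
      psiN_smul]
    simp only [Pi.smul_apply, smul_eq_mul, Complex.real_smul]
    split_ifs <;> push_cast <;> ring

lemma phiB_re (p : ℕ) (t : Fin p → ℝ) (j : Fin p) :
    (phiB p t j).re = psiN (p-1) (extF p t) j.val := by
  unfold phiB; split_ifs <;> simp

lemma phiB_im (p : ℕ) (t : Fin p → ℝ) (j : Fin p) :
    (phiB p t j).im = if j.val = 0 then extF p t (p-1) else 0 := by
  unfold phiB; split_ifs <;> simp

lemma caseB (p : ℕ) (hp : 2 ≤ p) :
    ∃ W : Submodule ℝ (Fin p → ℂ), Module.finrank ℝ W = p ∧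
      ∀ U : Matrix (Fin p) (Fin p) ℂ,
        (∀ i j, i ≠ j → U i j = 0) → (∀ i, ‖U i i‖ = 1) →
        (fun v => U.mulVec v) '' (W : Set (Fin p → ℂ)) = (W : Set (Fin p → ℂ)) →
        U = 1 ∨ U = -1 := by
  have hr1 : 1 ≤ p - 1 := by omega
  set f : (Fin p → ℝ) →ₗ[ℝ] (Fin p → ℂ) := IsLinearMap.mk' (phiB p) (phiB_lin p) with hf
  have hfappl : ∀ t j, f t j = phiB p t j := fun t j => rfl
  have hinj : Function.Injective f := by
    rw [← LinearMap.ker_eq_bot, LinearMap.ker_eq_bot']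
    intro t ht
    have hre : ∀ j : Fin p, psiN (p-1) (extF p t) j.val = 0 := by
      intro j
      have h := congrArg Complex.re (congrFun ht j)
      rw [hfappl, phiB_re] at h
      simpa using h
    have him0 : extF p t (p-1) = 0 := by
      have h := congrArg Complex.im (congrFun ht ⟨0, by omega⟩)
      rw [hfappl, phiB_im] at h
      simpa using h
    funext k
    rcases lt_or_ge k.val (p - 2) with hk | hk
    · have h := hre ⟨k.val, by omega⟩
      unfold psiN at h
      rw [if_pos (by show k.val < p - 1 - 1; omega)] at h
      unfold extF at h
      rw [dif_pos k.isLt] at h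
      simpa using h
    · rcases Nat.lt_or_ge k.val (p-1) with hk2 | hk2
      · have hkm : k.val = p - 2 := by omega
        have h := hre ⟨p - 1, by omega⟩
        rw [psiN_ge (p-1) hr1 _ _ (by show p - 1 ≤ p - 1; omega)] at h
        unfold extF at h
        rw [dif_pos (by omega : p - 1 - 1 < p)] at h
        have : k = (⟨p - 1 - 1, by omega⟩ : Fin p) := by apply Fin.ext; simpa using (by omega : k.val = p - 1 - 1)
        rw [this]; exact h
      · have hkm : k.val = p - 1 := by omega
        unfold extF at him0
        rw [dif_pos (by omega : p - 1 < p)] at him0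
        have : k = (⟨p - 1, by omega⟩ : Fin p) := by apply Fin.ext; simpa using hkm
        rw [this]; exact him0
  refine ⟨LinearMap.range f, ?_, ?_⟩
  · rw [← (LinearEquiv.ofInjective f hinj).finrank_eq]
    simp [Module.finrank_pi]
  intro U hdiag habs himg
  have hsub : ∀ w : Fin p → ℂ, w ∈ LinearMap.range f → U.mulVec w ∈ LinearMap.range f := by
    intro w hw
    have hmem : U.mulVec w ∈ (fun v => U.mulVec v) '' ((LinearMap.range f : Submodule ℝ (Fin p → ℂ)) : Set (Fin p → ℂ)) := ⟨w, hw, rfl⟩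
    rw [himg] at hmem
    exact hmem
  -- the all-ones vector is in the range
  have hones : f (fun k => if k.val = p - 1 then 0 else 1) = fun _ => (1:ℂ) := by
    funext j
    rw [hfappl]
    apply Complex.ext
    · rw [phiB_re]
      rw [psiN_ones (p-1) hr1 _ (fun i hi => by
        unfold extF; rw [dif_pos (by omega : i < p)]; simp only [Fin.val_mk]
        rw [if_neg (by omega)]) j.val]
      simp
    · rw [phiB_im]
      unfold extF
      rw [dif_pos (by omega : p - 1 < p)]
      simp
  -- the vector I·e₀ is in the range
  have hie0 : f (fun k => if k.val = p - 1 then 1 else 0)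
      = fun j : Fin p => if j.val = 0 then Complex.I else 0 := by
    funext j
    rw [hfappl]
    apply Complex.ext
    · rw [phiB_re]
      rw [psiN_zero (p-1) hr1 _ (fun i hi => by
        unfold extF; rw [dif_pos (by omega : i < p)]; simp only [Fin.val_mk]
        rw [if_neg (by omega)]) j.val]
      split_ifs <;> simp
    · rw [phiB_im]
      unfold extF
      rw [dif_pos (by omega : p - 1 < p)]
      split_ifs <;> simp
  obtain ⟨s, hs⟩ := hsub _ ⟨_, hones⟩
  obtain ⟨s', hs'⟩ := hsub _ ⟨_, hie0⟩
  have key : ∀ j : Fin p, phiB p s j = U j j := by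
    intro j
    have h := congrFun hs j
    rw [hfappl] at h
    rw [diag_mulVec U hdiag _ j, mul_one] at h
    exact h
  have key' : ∀ j : Fin p, phiB p s' j = if j.val = 0 then U j j * Complex.I else 0 := by
    intro j
    have h := congrFun hs' j
    rw [hfappl] at h
    rw [diag_mulVec U hdiag _ j] at h
    rw [h]
    split_ifs <;> simp
  -- imaginary parts vanish
  have him0 : (U ⟨0, by omega⟩ ⟨0, by omega⟩).im = 0 := by
    have hsum0 : ∑ j ∈ univ.filter (fun j : Fin p => j.val < p - 1),
        psiN (p-1) (extF p s') j.val = ((p-1 : ℕ) : ℝ) * extF p s' (p-1-1) :=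
      psiN_sum_fin p (p-1) hr1 (by omega) _
    have hlast : psiN (p-1) (extF p s') (⟨p-1, by omega⟩ : Fin p).val = 0 := by
      have h := congrArg Complex.re (key' ⟨p-1, by omega⟩)
      rw [phiB_re] at h
      rw [h, if_neg (by show ¬ (p-1 = 0); omega)]
      simp
    rw [psiN_ge (p-1) hr1 _ _ (by show p - 1 ≤ p - 1; omega)] at hlast
    have hterm : ∀ j : Fin p, psiN (p-1) (extF p s') j.val
        = if j.val = 0 then -(U j j).im else 0 := by
      intro j
      have h := congrArg Complex.re (key' j)
      rw [phiB_re] at h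
      rw [h]
      split_ifs <;> simp
    rw [Finset.sum_congr rfl (fun j _ => hterm j), hlast, mul_zero] at hsum0
    have hzero : ∑ j ∈ univ.filter (fun j : Fin p => j.val < p - 1),
        (if j.val = 0 then -(U j j).im else 0) = -(U ⟨0, by omega⟩ ⟨0, by omega⟩).im := by
      rw [Finset.sum_eq_single (⟨0, by omega⟩ : Fin p)]
      · simp
      · intro b _ hb
        rw [if_neg (fun hb0 => hb (Fin.ext hb0))]
      · intro hmem
        exfalso; apply hmem
        simp only [mem_filter, mem_univ, true_and]
        show (0:ℕ) < p - 1; omega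
    rw [hzero] at hsum0
    linarith
  have him : ∀ j : Fin p, (U j j).im = 0 := by
    intro j
    by_cases hj : j.val = 0
    · have : j = (⟨0, by omega⟩ : Fin p) := Fin.ext hj
      rw [this]; exact him0
    · have h := congrArg Complex.im (key j)
      rw [phiB_im, if_neg hj] at h
      exact h.symm
  have hpm : ∀ j, U j j = 1 ∨ U j j = -1 := fun j => unit_real (habs j) (him j)
  set c : ℝ := extF p s (p - 1 - 1) with hcdef
  have hre : ∀ j : Fin p, (U j j).re = psiN (p-1) (extF p s) j.val := by
    intro j
    have h := congrArg Complex.re (key j)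
    rw [phiB_re] at h
    exact h.symm
  have hge : ∀ j : Fin p, p - 1 ≤ j.val → (U j j).re = c := by
    intro j hj; rw [hre j, psiN_ge (p-1) hr1 _ _ hj]
  have hclast : (U ⟨p-1, by omega⟩ ⟨p-1, by omega⟩).re = c := hge _ (by show p - 1 ≤ p - 1; omega)
  have hc : c = 1 ∨ c = -1 := by
    rcases hpm ⟨p-1, by omega⟩ with h | h
    · left; rw [h] at hclast; simpa using hclast.symm
    · right; rw [h] at hclast; simp at hclast; exact hclast.symm
  have hsum : ∑ j ∈ univ.filter (fun j : Fin p => j.val < p - 1), (U j j).re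
      = ((univ.filter (fun j : Fin p => j.val < p - 1)).card : ℝ) * c := by
    rw [Finset.sum_congr rfl (fun j _ => hre j), psiN_sum_fin p (p-1) hr1 (by omega),
      card_fin_lt p (p-1) (by omega)]
  have hsigns : ∀ j ∈ univ.filter (fun j : Fin p => j.val < p - 1),
      (U j j).re = 1 ∨ (U j j).re = -1 := by
    intro j _
    rcases hpm j with h | h <;> rw [h] <;> simp
  have happ := sign_sum _ (fun j => (U j j).re) c hc hsigns hsum
  have hall : ∀ j : Fin p, (U j j).re = c := by
    intro j
    by_cases hj : j.val < p - 1
    · exact happ j (by simp [hj])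
    · exact hge j (by omega)
  have hend : ∀ j : Fin p, U j j = (c : ℂ) := by
    intro j
    have h1 := him j
    have h2 := hall j
    apply Complex.ext
    · simpa using h2
    · simpa using h1
  exact diag_eq_pm_one U hdiag (c:ℂ)
    (hc.imp (fun h => by rw [h]; norm_num) (fun h => by rw [h]; norm_num)) hend


/-! ### Case C : `p < m ≤ 2p - 1` -/

noncomputable def phiC (p m : ℕ) (t : Fin m → ℝ) (j : Fin p) : ℂ :=
  ((extF m t j.val : ℝ) : ℂ) +
    ((psiN (m-p) (fun i => extF m t (p + i)) j.val : ℝ) : ℂ) * Complex.I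

lemma phiC_lin (p m : ℕ) : IsLinearMap ℝ (phiC p m) := by
  constructor
  · intro t t'; funext j
    unfold phiC
    rw [show (fun i => extF m (t + t') (p + i)) = fun i => extF m t (p+i) + extF m t' (p+i)
        from funext (fun i => extF_add m t t' (p+i)), psiN_add, extF_add]
    simp only [Pi.add_apply]
    push_cast; ring
  · intro c t; funext j
    unfold phiC
    rw [show (fun i => extF m (c • t) (p + i)) = fun i => c * extF m t (p+i)
        from funext (fun i => extF_smul m c t (p+i)), psiN_smul, extF_smul]
    simp only [Pi.smul_apply, smul_eq_mul, Complex.real_smul]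
    push_cast; ring

lemma phiC_re (p m : ℕ) (t : Fin m → ℝ) (j : Fin p) :
    (phiC p m t j).re = extF m t j.val := by
  unfold phiC; simp

lemma phiC_im (p m : ℕ) (t : Fin m → ℝ) (j : Fin p) :
    (phiC p m t j).im = psiN (m-p) (fun i => extF m t (p + i)) j.val := by
  unfold phiC; simp

lemma caseC (p m : ℕ) (hp : 2 ≤ p) (hpm : p < m) (hm2 : m ≤ 2 * p - 1) :
    ∃ W : Submodule ℝ (Fin p → ℂ), Module.finrank ℝ W = m ∧
      ∀ U : Matrix (Fin p) (Fin p) ℂ,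
        (∀ i j, i ≠ j → U i j = 0) → (∀ i, ‖U i i‖ = 1) →
        (fun v => U.mulVec v) '' (W : Set (Fin p → ℂ)) = (W : Set (Fin p → ℂ)) →
        U = 1 ∨ U = -1 := by
  have hr1 : 1 ≤ m - p := by omega
  have hrp : m - p ≤ p - 1 := by omega
  set f : (Fin m → ℝ) →ₗ[ℝ] (Fin p → ℂ) := IsLinearMap.mk' (phiC p m) (phiC_lin p m) with hf
  have hfappl : ∀ t j, f t j = phiC p m t j := fun t j => rfl
  have hinj : Function.Injective f := by
    rw [← LinearMap.ker_eq_bot, LinearMap.ker_eq_bot']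
    intro t ht
    have hre : ∀ j : Fin p, extF m t j.val = 0 := by
      intro j
      have h := congrArg Complex.re (congrFun ht j)
      rw [hfappl, phiC_re] at h
      simpa using h
    have him : ∀ j : Fin p, psiN (m-p) (fun i => extF m t (p + i)) j.val = 0 := by
      intro j
      have h := congrArg Complex.im (congrFun ht j)
      rw [hfappl, phiC_im] at h
      simpa using h
    funext k
    rcases lt_or_ge k.val p with hk | hk
    · have h := hre ⟨k.val, hk⟩
      unfold extF at h
      rw [dif_pos k.isLt] at h
      simpa using h
    · rcases lt_or_ge (k.val - p) (m - p - 1) with hk2 | hk2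
      · have h := him ⟨k.val - p, by omega⟩
        unfold psiN at h
        rw [if_pos (by show k.val - p < m - p - 1; omega)] at h
        simp only [Fin.val_mk] at h
        unfold extF at h
        rw [dif_pos (by omega : p + (k.val - p) < m)] at h
        have : (⟨p + (k.val - p), by omega⟩ : Fin m) = k := by apply Fin.ext; simp; omega
        rw [this] at h
        exact h
      · have h := him ⟨p - 1, by omega⟩
        rw [psiN_ge (m-p) hr1 _ _ (by show m - p ≤ p - 1; omega)] at h
        unfold extF at h
        rw [dif_pos (by omega : p + (m - p - 1) < m)] at h
        have : (⟨p + (m - p - 1), by omega⟩ : Fin m) = k := by apply Fin.ext; simp; omega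
        rw [this] at h
        exact h
  refine ⟨LinearMap.range f, ?_, ?_⟩
  · rw [← (LinearEquiv.ofInjective f hinj).finrank_eq]
    simp [Module.finrank_pi]
  intro U hdiag habs himg
  have hsub : ∀ w : Fin p → ℂ, w ∈ LinearMap.range f → U.mulVec w ∈ LinearMap.range f := by
    intro w hw
    have hmem : U.mulVec w ∈ (fun v => U.mulVec v) '' ((LinearMap.range f : Submodule ℝ (Fin p → ℂ)) : Set (Fin p → ℂ)) := ⟨w, hw, rfl⟩
    rw [himg] at hmem
    exact hmem
  -- each standard basis vector is in the range
  have hek : ∀ k : Fin p, f (fun l : Fin m => if l.val = k.val then 1 else 0)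
      = fun j : Fin p => if j = k then 1 else 0 := by
    intro k
    funext j
    rw [hfappl]
    apply Complex.ext
    · rw [phiC_re]
      unfold extF
      rw [dif_pos (by omega : j.val < m)]
      simp only [Fin.val_mk]
      by_cases hj : j = k
      · rw [if_pos (by rw [hj]), if_pos hj]; simp
      · rw [if_neg (fun hv => hj (Fin.ext hv)), if_neg hj]; simp
    · rw [phiC_im]
      rw [psiN_zero (m-p) hr1 _ (fun i hi => by
        unfold extF
        split_ifs with h
        · simp only [Fin.val_mk]
          have hkp := k.isLt
          rw [if_neg (by omega)]
        · rfl) j.val]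
      split_ifs <;> simp
  -- the vector i·(1,…,1) is in the range
  have hi1 : f (fun l : Fin m => if l.val < p then 0 else 1)
      = fun _ : Fin p => Complex.I := by
    funext j
    rw [hfappl]
    apply Complex.ext
    · rw [phiC_re]
      unfold extF
      rw [dif_pos (by omega : j.val < m)]
      simp only [Fin.val_mk]
      rw [if_pos j.isLt]
      simp
    · rw [phiC_im]
      rw [psiN_ones (m-p) hr1 _ (fun i hi => by
        unfold extF
        rw [dif_pos (by omega : p + i < m)]
        simp only [Fin.val_mk]
        rw [if_neg (by omega)]) j.val]
      simp
  -- step 1 : all diagonal entries are real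
  have him : ∀ k : Fin p, (U k k).im = 0 := by
    intro k
    obtain ⟨s, hs⟩ := hsub _ ⟨_, hek k⟩
    have key : ∀ j : Fin p, phiC p m s j = if j = k then U k k else 0 := by
      intro j
      have h := congrFun hs j
      rw [hfappl] at h
      rw [diag_mulVec U hdiag _ j] at h
      rw [h]
      by_cases hj : j = k
      · rw [if_pos hj, if_pos hj, hj, mul_one]
      · rw [if_neg hj, if_neg hj, mul_zero]
    have hterm : ∀ j : Fin p, psiN (m-p) (fun i => extF m s (p + i)) j.val
        = if j = k then (U k k).im else 0 := by
      intro j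
      have h := congrArg Complex.im (key j)
      rw [phiC_im] at h
      rw [h]
      split_ifs <;> simp
    set c : ℝ := extF m s (p + (m - p - 1)) with hcdef
    have hsum0 : ∑ j ∈ univ.filter (fun j : Fin p => j.val < m - p),
        psiN (m-p) (fun i => extF m s (p + i)) j.val = ((m - p : ℕ) : ℝ) * c :=
      psiN_sum_fin p (m-p) hr1 (by omega) _
    rw [Finset.sum_congr rfl (fun j _ => hterm j)] at hsum0
    rw [Finset.sum_ite_eq' _ k (fun _ => (U k k).im)] at hsum0
    by_cases hk : k.val < m - p
    · -- then `c = 0` from the coordinate `p-1 ≠ k`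
      have hne : (⟨p-1, by omega⟩ : Fin p) ≠ k := by
        intro h
        have := congrArg Fin.val h
        simp at this; omega
      have hlast := hterm ⟨p-1, by omega⟩
      rw [psiN_ge (m-p) hr1 _ _ (by show m - p ≤ p - 1; omega), if_neg hne] at hlast
      rw [if_pos (by simp [hk])] at hsum0
      rw [hcdef, hlast, mul_zero] at hsum0
      exact hsum0
    · rw [if_neg (by simp [hk])] at hsum0
      have hc0 : c = 0 := by
        have hne : ((m - p : ℕ) : ℝ) ≠ 0 := by
          simp only [ne_eq, Nat.cast_eq_zero]; omega
        exact (mul_eq_zero.mp hsum0.symm).resolve_left hne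
      have hlast := hterm k
      rw [psiN_ge (m-p) hr1 _ _ (by omega), if_pos rfl] at hlast
      rw [← hlast, ← hcdef]
      exact hc0
  have hpm : ∀ j, U j j = 1 ∨ U j j = -1 := fun j => unit_real (habs j) (him j)
  -- step 2 : all diagonal entries are equal
  obtain ⟨s, hs⟩ := hsub _ ⟨_, hi1⟩
  have key : ∀ j : Fin p, phiC p m s j = U j j * Complex.I := by
    intro j
    have h := congrFun hs j
    rw [hfappl] at h
    rw [diag_mulVec U hdiag _ j] at h
    exact h
  have hre : ∀ j : Fin p, (U j j).re = psiN (m-p) (fun i => extF m s (p + i)) j.val := by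
    intro j
    have h := congrArg Complex.im (key j)
    rw [phiC_im] at h
    simpa using h.symm
  set c : ℝ := extF m s (p + (m - p - 1)) with hcdef
  have hge : ∀ j : Fin p, m - p ≤ j.val → (U j j).re = c := by
    intro j hj; rw [hre j, psiN_ge (m-p) hr1 _ _ hj]
  have hclast : (U ⟨p-1, by omega⟩ ⟨p-1, by omega⟩).re = c := hge _ (by show m - p ≤ p - 1; omega)
  have hc : c = 1 ∨ c = -1 := by
    rcases hpm ⟨p-1, by omega⟩ with h | h
    · left; rw [h] at hclast; simpa using hclast.symm
    · right; rw [h] at hclast; simp at hclast; exact hclast.symm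
  have hsum : ∑ j ∈ univ.filter (fun j : Fin p => j.val < m - p), (U j j).re
      = ((univ.filter (fun j : Fin p => j.val < m - p)).card : ℝ) * c := by
    rw [Finset.sum_congr rfl (fun j _ => hre j), psiN_sum_fin p (m-p) hr1 (by omega),
      card_fin_lt p (m-p) (by omega)]
  have hsigns : ∀ j ∈ univ.filter (fun j : Fin p => j.val < m - p),
      (U j j).re = 1 ∨ (U j j).re = -1 := by
    intro j _
    rcases hpm j with h | h <;> rw [h] <;> simp
  have happ := sign_sum _ (fun j => (U j j).re) c hc hsigns hsum
  have hall : ∀ j : Fin p, (U j j).re = c := by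
    intro j
    by_cases hj : j.val < m - p
    · exact happ j (by simp [hj])
    · exact hge j (by omega)
  have hend : ∀ j : Fin p, U j j = (c : ℂ) := by
    intro j
    apply Complex.ext
    · simpa using hall j
    · simpa using him j
  exact diag_eq_pm_one U hdiag (c:ℂ)
    (hc.imp (fun h => by rw [h]; norm_num) (fun h => by rw [h]; norm_num)) hend

end NotInvariantAux


/-- There is an `m`-dimensional real subspace of `ℂᵖ` (`1 ≤ m ≤ 2p - 1`) invariant under
no diagonal unitary matrix other than `±1`. -/
theorem exists_real_subspace_not_invariant_diagonal_unitary
    (p m : ℕ) (hp : 2 ≤ p) (hm₁ : 1 ≤ m) (hm₂ : m ≤ 2 * p - 1) :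
    ∃ W : Submodule ℝ (Fin p → ℂ), Module.finrank ℝ W = m ∧
      ∀ U : Matrix (Fin p) (Fin p) ℂ,
        (∀ i j, i ≠ j → U i j = 0) → (∀ i, ‖U i i‖ = 1) →
        (fun v => U.mulVec v) '' (W : Set (Fin p → ℂ)) = (W : Set (Fin p → ℂ)) →
        U = 1 ∨ U = -1 := by
  rcases lt_trichotomy m p with h | h | h
  · exact NotInvariantAux.caseA p m hp hm₁ h
  · subst h
    exact NotInvariantAux.caseB m hp
  · exact NotInvariantAux.caseC p m hp h hm₂
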